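/- Let G = ⟨g, h ; gⁿ = hᵐ⟩ with n, m ≥ 2 and (n,m) ≠ (2,2). Then the subgroup H = ⟨gⁿ, gh⟩ has infinite index in G. -/

import Mathlib

/-- The relator `gⁿ h⁻ᵐ` presenting `⟨g, h ; gⁿ = hᵐ⟩`; `false` is `g`, `true` is `h`. -/
def PowRels (n m : ℕ) : Set (FreeGroup Bool) :=
  {FreeGroup.of false ^ n * (FreeGroup.of true ^ m)⁻¹}

namespace PowAux

open Monoid.CoprodI

variable {ι : Type*} [DecidableEq ι] {G : ι → Type*} [∀ i, Group (G i)] [∀ i, DecidableEq (G i)]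

/-- The alternating list `[⟨i,a⟩, ⟨j,b⟩, ⟨i,a⟩, ⟨j,b⟩, ...]` of length `2s`. -/
def altList {i j : ι} (a : G i) (b : G j) : ℕ → List (Σ i, G i)
  | 0 => []
  | s + 1 => ⟨i, a⟩ :: ⟨j, b⟩ :: altList a b s

omit [DecidableEq ι] [(i : ι) → DecidableEq (G i)] in
theorem exists_altWord {i j : ι} (hij : i ≠ j) (a : G i) (b : G j) (ha : a ≠ 1) (hb : b ≠ 1) :
    ∀ s : ℕ, ∃ w : Word G, w.toList = altList a b s ∧ w.prod = (of a * of b) ^ s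
  | 0 => ⟨Word.empty, rfl, by simp⟩
  | s + 1 => by
    obtain ⟨w, hl, hp⟩ := exists_altWord hij a b ha hb s
    have hfst : w.fstIdx ≠ some j := by
      cases s with
      | zero =>
        simp only [altList] at hl
        simp [Word.fstIdx, hl]
      | succ s =>
        simp only [altList] at hl
        intro hc
        rw [Word.fstIdx, hl] at hc
        simp at hc
        exact hij hc
    have hfst2 : (Word.cons b w hfst hb).fstIdx ≠ some i := by
      rw [Word.fstIdx_cons]
      intro hc
      simp at hc
      exact hij hc.symm
    refine ⟨Word.cons a (Word.cons b w hfst hb) hfst2 ha, ?_, ?_⟩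
    · simp [Word.cons, hl, altList]
    · rw [Word.prod_cons, Word.prod_cons, hp, pow_succ', mul_assoc]

theorem prod_injective : Function.Injective (Word.prod : Word G → Monoid.CoprodI G) :=
  fun w₁ w₂ h => Word.equiv.symm.injective (by exact h)

theorem keyNat {i j : ι} (hij : i ≠ j) {a a' : G i} {b b' : G j}
    (ha : a ≠ 1) (hb : b ≠ 1) (ha' : a' ≠ 1) (hb' : b' ≠ 1) (s t : ℕ)
    (h : (of a * of b) ^ (s + 1) = (of a' * of b') ^ (t + 1)) : a = a' ∧ b = b' := by
  obtain ⟨w1, hl1, hp1⟩ := exists_altWord hij a b ha hb (s + 1)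
  obtain ⟨w2, hl2, hp2⟩ := exists_altWord hij a' b' ha' hb' (t + 1)
  have hw : w1 = w2 := prod_injective (hp1.trans (h.trans hp2.symm))
  rw [hw, hl2] at hl1
  simp only [altList, List.cons.injEq, Sigma.mk.inj_iff, heq_eq_eq, true_and] at hl1
  exact ⟨hl1.1.symm, hl1.2.1.symm⟩

theorem keyNat2 {i j : ι} (hij : i ≠ j) {a a'' : G i} {b b'' : G j}
    (ha : a ≠ 1) (hb : b ≠ 1) (hb'' : b'' ≠ 1) (ha'' : a'' ≠ 1) (s t : ℕ)
    (h : (of a * of b) ^ (s + 1) = (of b'' * of a'') ^ (t + 1)) : False := by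
  obtain ⟨w1, hl1, hp1⟩ := exists_altWord hij a b ha hb (s + 1)
  obtain ⟨w2, hl2, hp2⟩ := exists_altWord hij.symm b'' a'' hb'' ha'' (t + 1)
  have hw : w1 = w2 := prod_injective (hp1.trans (h.trans hp2.symm))
  rw [hw, hl2] at hl1
  simp only [altList, List.cons.injEq, Sigma.mk.inj_iff] at hl1
  exact hij hl1.1.1.symm

theorem keyNat0 {i j : ι} (hij : i ≠ j) {a : G i} {b : G j}
    (ha : a ≠ 1) (hb : b ≠ 1) (s : ℕ) :
    (of a * of b) ^ (s + 1) ≠ (1 : Monoid.CoprodI G) := by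
  intro h
  obtain ⟨w1, hl1, hp1⟩ := exists_altWord hij a b ha hb (s + 1)
  have hw : w1 = Word.empty := prod_injective (by rw [hp1, h, Word.prod_empty])
  rw [hw] at hl1
  simp [altList, Word.empty] at hl1

theorem zpow_pos_eq {H : Type*} [Group H] (x : H) (t : ℤ) (ht : 0 < t) :
    x ^ t = x ^ ((t - 1).toNat + 1) := by
  rw [← zpow_natCast]
  congr 1
  omega

omit [DecidableEq ι] [(i : ι) → DecidableEq (G i)] in
theorem zpow_neg_eq {i j : ι} (a : G i) (b : G j) (t : ℤ) (ht : t < 0) :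
    (of a * of b) ^ t = (of b⁻¹ * of a⁻¹) ^ ((-t - 1).toNat + 1) := by
  have h1 : (of b⁻¹ * of a⁻¹ : Monoid.CoprodI G) = (of a * of b)⁻¹ := by
    rw [mul_inv_rev, map_inv, map_inv]
  rw [h1, inv_pow, ← zpow_natCast, ← zpow_neg]
  congr 1
  omega

theorem key {i j : ι} (hij : i ≠ j) {a a' : G i} {b b' : G j}
    (ha : a ≠ 1) (hb : b ≠ 1) (ha' : a' ≠ 1) (hb' : b' ≠ 1)
    (hne : a ≠ a' ∨ b ≠ b') (u t : ℤ)
    (h : (of a * of b) ^ u = (of a' * of b') ^ t) : u = 0 := by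
  by_contra hu
  have hai : a⁻¹ ≠ 1 := inv_ne_one.2 ha
  have hbi : b⁻¹ ≠ 1 := inv_ne_one.2 hb
  have hai' : a'⁻¹ ≠ 1 := inv_ne_one.2 ha'
  have hbi' : b'⁻¹ ≠ 1 := inv_ne_one.2 hb'
  rcases (Ne.lt_or_gt hu) with hneg | hpos
  · rw [zpow_neg_eq a b u hneg] at h
    rcases lt_trichotomy t 0 with h3 | h3 | h3
    · rw [zpow_neg_eq a' b' t h3] at h
      obtain ⟨hb2, ha2⟩ := keyNat hij.symm hbi hai hbi' hai' _ _ h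
      rcases hne with hne | hne
      · exact hne (inv_injective ha2)
      · exact hne (inv_injective hb2)
    · rw [h3, zpow_zero] at h
      exact keyNat0 hij.symm hbi hai _ h
    · rw [zpow_pos_eq _ t h3] at h
      exact keyNat2 hij.symm hbi hai ha' hb' _ _ h
  · rw [zpow_pos_eq _ u hpos] at h
    rcases lt_trichotomy t 0 with h3 | h3 | h3
    · rw [zpow_neg_eq a' b' t h3] at h
      exact keyNat2 hij ha hb hbi' hai' _ _ h
    · rw [h3, zpow_zero] at h
      exact keyNat0 hij ha hb _ h
    · rw [zpow_pos_eq _ t h3] at h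
      obtain ⟨ha2, hb2⟩ := keyNat hij ha hb ha' hb' _ _ h
      rcases hne with hne | hne
      · exact hne ha2
      · exact hne hb2

/-! ### Facts about `Multiplicative (ZMod k)` -/

theorem zmod_pow_self (k : ℕ) : (Multiplicative.ofAdd (1 : ZMod k)) ^ k = 1 := by
  rw [← ofAdd_nsmul, nsmul_eq_mul, mul_one, ZMod.natCast_self, ofAdd_zero]

theorem zmod_gen_ne_one (k : ℕ) [Fact (1 < k)] : Multiplicative.ofAdd (1 : ZMod k) ≠ 1 := by
  rw [Ne, ofAdd_eq_one]
  exact one_ne_zero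

theorem zmod_sq_ne_one (k : ℕ) (hk : 3 ≤ k) : (Multiplicative.ofAdd (1 : ZMod k)) ^ 2 ≠ 1 := by
  rw [← ofAdd_nsmul, Ne, ofAdd_eq_one, nsmul_eq_mul, mul_one]
  intro hc
  rw [ZMod.natCast_eq_zero_iff] at hc
  have := Nat.le_of_dvd (by norm_num) hc
  omega

theorem zmod_sq_ne_self (k : ℕ) [Fact (1 < k)] :
    (Multiplicative.ofAdd (1 : ZMod k)) ^ 2 ≠ Multiplicative.ofAdd (1 : ZMod k) := by
  intro hc
  have h2 : Multiplicative.ofAdd (1 : ZMod k) * Multiplicative.ofAdd (1 : ZMod k) =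
      Multiplicative.ofAdd (1 : ZMod k) * 1 := by
    rw [mul_one, ← sq]
    exact hc
  exact zmod_gen_ne_one k (mul_left_cancel h2)

theorem zmod_gen_pow (k : ℕ) [NeZero k] (x : Multiplicative (ZMod k)) :
    (Multiplicative.ofAdd (1 : ZMod k)) ^ (Multiplicative.toAdd x).val = x := by
  rw [← ofAdd_nsmul, nsmul_eq_mul, mul_one, ZMod.natCast_val, ZMod.cast_id]
  exact ofAdd_toAdd x

end PowAux

section Main

open Monoid.CoprodI PowAux

/-- The family `b ↦ ℤ/n` (for `b = false`) resp. `ℤ/m` (for `b = true`), multiplicatively. -/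
abbrev MF (n m : ℕ) : Bool → Type := fun b => Multiplicative (ZMod (bif b then m else n))

/-- In `G = ⟨g, h ; gⁿ = hᵐ⟩` with `n, m ≥ 2` and `(n,m) ≠ (2,2)`, the subgroup
`H = ⟨gⁿ, g h⟩` has infinite index in `G`. -/
theorem pow_amalgam_subgroup_infinite_index (n m : ℕ) (hn : 2 ≤ n) (hm : 2 ≤ m)
    (hnm : (n, m) ≠ (2, 2)) :
    let g : PresentedGroup (PowRels n m) := PresentedGroup.of false
    let h : PresentedGroup (PowRels n m) := PresentedGroup.of true
    (Subgroup.closure {g ^ n, g * h}).index = 0 := by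
  intro g h
  haveI : NeZero n := ⟨by omega⟩
  haveI : NeZero m := ⟨by omega⟩
  haveI : Fact (1 < n) := ⟨by omega⟩
  haveI : Fact (1 < m) := ⟨by omega⟩
  set gg : MF n m false := Multiplicative.ofAdd (1 : ZMod n) with hgg
  set hh : MF n m true := Multiplicative.ofAdd (1 : ZMod m) with hhh
  have hgg1 : gg ≠ 1 := by rw [hgg]; exact zmod_gen_ne_one n
  have hhh1 : hh ≠ 1 := by rw [hhh]; exact zmod_gen_ne_one m
  have hggn : gg ^ n = 1 := by rw [hgg]; exact zmod_pow_self n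
  have hhhm : hh ^ m = 1 := by rw [hhh]; exact zmod_pow_self m
  have hofgg : (of gg : Monoid.CoprodI (MF n m)) ^ n = 1 := by
    have e := map_pow (of : MF n m false →* Monoid.CoprodI (MF n m)) gg n
    rw [hggn] at e
    rw [← e]
    exact map_one of
  have hofhh : (of hh : Monoid.CoprodI (MF n m)) ^ m = 1 := by
    have e := map_pow (of : MF n m true →* Monoid.CoprodI (MF n m)) hh m
    rw [hhhm] at e
    rw [← e]
    exact map_one of
  -- the homomorphism to the free product ℤ/n * ℤ/m
  have hrels : ∀ r ∈ PowRels n m,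
      FreeGroup.lift (fun b => bif b then (of hh : Monoid.CoprodI (MF n m)) else of gg) r = 1 := by
    intro r hr
    rw [PowRels, Set.mem_singleton_iff] at hr
    subst hr
    rw [map_mul, map_inv, map_pow, map_pow, FreeGroup.lift_apply_of, FreeGroup.lift_apply_of]
    show (of gg) ^ n * ((of hh) ^ m)⁻¹ = 1
    rw [hofgg, hofhh, inv_one, mul_one]
  set φ : PresentedGroup (PowRels n m) →* Monoid.CoprodI (MF n m) :=
    PresentedGroup.toGroup hrels with hφ
  have hφg : φ g = of gg := PresentedGroup.toGroup.of hrels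
  have hφh : φ h = of hh := PresentedGroup.toGroup.of hrels
  have hφsurj : Function.Surjective φ := by
    intro x
    induction x using Monoid.CoprodI.induction_on with
    | one => exact ⟨1, map_one φ⟩
    | of i x =>
      cases i with
      | false =>
        refine ⟨g ^ (Multiplicative.toAdd x).val, ?_⟩
        have e := map_pow (of : MF n m false →* Monoid.CoprodI (MF n m)) gg
          (Multiplicative.toAdd x).val
        rw [map_pow, hφg, ← e]
        congr 1
        rw [hgg]
        exact zmod_gen_pow n x
      | true =>
        refine ⟨h ^ (Multiplicative.toAdd x).val, ?_⟩
        have e := map_pow (of : MF n m true →* Monoid.CoprodI (MF n m)) hh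
          (Multiplicative.toAdd x).val
        rw [map_pow, hφh, ← e]
        congr 1
        rw [hhh]
        exact zmod_gen_pow m x
    | mul x y hx hy =>
      obtain ⟨x', rfl⟩ := hx
      obtain ⟨y', rfl⟩ := hy
      exact ⟨x' * y', map_mul φ x' y'⟩
  set C : Subgroup (Monoid.CoprodI (MF n m)) := Subgroup.closure {of gg * of hh} with hC
  -- H maps into C
  have hle : Subgroup.closure {g ^ n, g * h} ≤ C.comap φ := by
    rw [Subgroup.closure_le]
    rintro x hx
    rcases hx with rfl | rfl
    · show φ (g ^ n) ∈ C
      rw [map_pow, hφg, hofgg]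
      exact C.one_mem
    · show φ (g * h) ∈ C
      rw [map_mul, hφg, hφh]
      exact Subgroup.subset_closure (Set.mem_singleton _)
  -- choose an element giving infinitely many distinct cosets
  have hcases : 3 ≤ n ∨ 3 ≤ m := by
    rcases Nat.lt_or_ge n 3 with h' | h'
    · rcases Nat.lt_or_ge m 3 with h'' | h''
      · exfalso
        apply hnm
        have : n = 2 := by omega
        have : m = 2 := by omega
        simp_all
      · exact Or.inr h''
    · exact Or.inl h'
  obtain ⟨a, b, ha, hb, hne⟩ :
      ∃ (a : MF n m false) (b : MF n m true), a ≠ 1 ∧ b ≠ 1 ∧ (a ≠ gg ∨ b ≠ hh) := by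
    rcases hcases with h3 | h3
    · refine ⟨gg ^ 2, hh, ?_, hhh1, Or.inl ?_⟩
      · rw [hgg]; exact zmod_sq_ne_one n h3
      · rw [hgg]; exact zmod_sq_ne_self n
    · refine ⟨gg, hh ^ 2, hgg1, ?_, Or.inr ?_⟩
      · rw [hhh]; exact zmod_sq_ne_one m h3
      · rw [hhh]; exact zmod_sq_ne_self m
  -- infinitely many cosets of C
  have hinf : Infinite (Monoid.CoprodI (MF n m) ⧸ C) := by
    refine Infinite.of_injective
      (fun k : ℕ => (QuotientGroup.mk ((of a * of b) ^ k) : Monoid.CoprodI (MF n m) ⧸ C)) ?_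
    intro k l hkl
    rw [QuotientGroup.eq, hC, Subgroup.mem_closure_singleton] at hkl
    obtain ⟨t, ht⟩ := hkl
    have heq : (of a * of b : Monoid.CoprodI (MF n m)) ^ ((-(k : ℤ)) + (l : ℤ)) =
        (of gg * of hh) ^ t := by
      rw [zpow_add, zpow_neg, zpow_natCast, zpow_natCast, ht]
    have := key (G := MF n m) (Bool.false_ne_true) ha hb hgg1 hhh1 hne _ _ heq
    omega
  have hCidx : C.index = 0 := by
    rw [Subgroup.index]
    exact Nat.card_eq_zero_of_infinite
  have hcomap : (C.comap φ).index = 0 :=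
    (Subgroup.index_comap_of_surjective C hφsurj).trans hCidx
  have hdvd := Subgroup.index_dvd_of_le hle
  rw [hcomap] at hdvd
  exact zero_dvd_iff.mp hdvd

end Main
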